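/- Let A ⊆ B be a regular C*-inclusion and E : B → A an almost faithful conditional expectation such that E(M) ⊆ M for every slice M ⊆ B. Then E is faithful. -/

import Mathlib

open scoped MultiplierAlgebra

noncomputable section

namespace NCCartan

variable {B : Type*} [NonUnitalCStarAlgebra B] [PartialOrder B] [StarOrderedRing B]

/-- A closed two-sided ideal of the C*-subalgebra of `B` with carrier `A`. -/
structure CIdealIn (A : Set B) where
  carrier : Set B
  subset : carrier ⊆ A
  zero_mem : (0 : B) ∈ carrier
  add_mem : ∀ x ∈ carrier, ∀ y ∈ carrier, x + y ∈ carrier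
  smul_mem : ∀ (c : ℂ), ∀ x ∈ carrier, c • x ∈ carrier
  mul_left : ∀ a ∈ A, ∀ x ∈ carrier, a * x ∈ carrier
  mul_right : ∀ a ∈ A, ∀ x ∈ carrier, x * a ∈ carrier
  isClosed : IsClosed carrier

/-- The inclusion `A ⊆ B` is non-degenerate: the closed linear span of `A·B` is all of `B`. -/
def Nondegenerate (A : Set B) : Prop :=
  Dense ((Submodule.span ℂ {x : B | ∃ a ∈ A, ∃ b : B, x = a * b} : Submodule ℂ B) : Set B)

/-- `b` is a normaliser of `A` in `B`. -/
def IsNormalizerOf (A : Set B) (b : B) : Prop :=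
  (∀ a ∈ A, b * a * star b ∈ A) ∧ (∀ a ∈ A, star b * a * b ∈ A)

/-- The inclusion `A ⊆ B` is regular: it is non-degenerate and the linear span of the
normalisers is dense in `B`. -/
def RegularInclusion (A : Set B) : Prop :=
  Nondegenerate A ∧
    Dense ((Submodule.span ℂ {b : B | IsNormalizerOf A b} : Submodule ℂ B) : Set B)

/-- A conditional expectation from `B` onto the C*-subalgebra with carrier `A`. -/
structure CondExp (A : Set B) where
  toFun : B →ₗ[ℂ] B
  mem_range : ∀ b : B, toFun b ∈ A
  fixes : ∀ a ∈ A, toFun a = a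
  contractive : ∀ b : B, ‖toFun b‖ ≤ ‖b‖
  positive : ∀ b : B, 0 ≤ b → 0 ≤ toFun b
  bimodule : ∀ a ∈ A, ∀ c ∈ A, ∀ b : B, toFun (a * b * c) = a * toFun b * c

/-- `E` is faithful: `E(b* b) = 0` implies `b = 0`. -/
def CondExp.Faithful {A : Set B} (E : CondExp A) : Prop :=
  ∀ b : B, E.toFun (star b * b) = 0 → b = 0

/-- `E` is almost faithful: `E((b c)* (b c)) = 0` for all `c` implies `b = 0`. -/
def CondExp.AlmostFaithful {A : Set B} (E : CondExp A) : Prop :=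
  ∀ b : B, (∀ c : B, E.toFun (star (b * c) * (b * c)) = 0) → b = 0

/-- The set `IBI`: the closed linear span of `{x b y : x, y ∈ I, b ∈ B}`. -/
def IBISet (I : Set B) : Set B :=
  closure ((Submodule.span ℂ {z : B | ∃ p ∈ I, ∃ b : B, ∃ q ∈ I, z = p * b * q} :
    Submodule ℂ B) : Set B)

/-- A conditional expectation from the C*-subalgebra of `B` with carrier `C` onto the
ideal with carrier `I ⊆ C`; only the values of `toFun` on `C` are relevant. -/
structure CondExpOnSub (C : Set B) (I : Set B) where
  toFun : B → B
  map_add : ∀ x ∈ C, ∀ y ∈ C, toFun (x + y) = toFun x + toFun y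
  map_smul : ∀ (c : ℂ), ∀ x ∈ C, toFun (c • x) = c • toFun x
  mem_range : ∀ x ∈ C, toFun x ∈ I
  fixes : ∀ x ∈ I, toFun x = x
  contractive : ∀ x ∈ C, ‖toFun x‖ ≤ ‖x‖
  positive : ∀ x ∈ C, 0 ≤ x → 0 ≤ toFun x
  bimodule : ∀ p ∈ I, ∀ q ∈ I, ∀ b ∈ C, toFun (p * b * q) = p * toFun b * q

def CondExpOnSub.Faithful {C I : Set B} (P : CondExpOnSub C I) : Prop :=
  ∀ x ∈ C, P.toFun (star x * x) = 0 → x = 0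

def CondExpOnSub.AlmostFaithful {C I : Set B} (P : CondExpOnSub C I) : Prop :=
  ∀ x ∈ C, (∀ c ∈ C, P.toFun (star (x * c) * (x * c)) = 0) → x = 0

/-- A virtual commutant of `A` in `B` defined on the ideal with carrier `I`;
only the values of `toFun` on `I` are relevant. -/
structure VirtualCommutant (A : Set B) (I : Set B) where
  toFun : B → B
  map_add : ∀ x ∈ I, ∀ y ∈ I, toFun (x + y) = toFun x + toFun y
  map_smul : ∀ (c : ℂ), ∀ x ∈ I, toFun (c • x) = c • toFun x
  left_mod : ∀ a ∈ A, ∀ x ∈ I, toFun (a * x) = a * toFun x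
  right_mod : ∀ a ∈ A, ∀ x ∈ I, toFun (x * a) = toFun x * a

/-- A slice for the inclusion `A ⊆ B`: a closed linear subspace `M` with `A·M ⊆ M`,
`M·A ⊆ M`, `M*·M ⊆ A` and `M·M* ⊆ A`. -/
structure IsSlice (A : Set B) (M : Submodule ℂ B) : Prop where
  isClosed : IsClosed (M : Set B)
  mul_left : ∀ a ∈ A, ∀ m ∈ M, a * m ∈ M
  mul_right : ∀ a ∈ A, ∀ m ∈ M, m * a ∈ M
  star_mul_mem : ∀ m ∈ M, ∀ n ∈ M, star m * n ∈ A
  mul_star_mem : ∀ m ∈ M, ∀ n ∈ M, m * star n ∈ A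

/-- An isomorphism of Hilbert `A`-bimodules from the ideal with carrier `I` onto the
subset `M` of `B`; only the values of `toFun` on `I` are relevant. -/
structure HilbertBimoduleIso (A : Set B) (I : Set B) (M : Set B) where
  toFun : B → B
  map_add : ∀ x ∈ I, ∀ y ∈ I, toFun (x + y) = toFun x + toFun y
  map_smul : ∀ (c : ℂ), ∀ x ∈ I, toFun (c • x) = c • toFun x
  maps_into : ∀ x ∈ I, toFun x ∈ M
  injOn : ∀ x ∈ I, ∀ y ∈ I, toFun x = toFun y → x = y
  surjOn : ∀ m ∈ M, ∃ x ∈ I, toFun x = m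
  bimod : ∀ a ∈ A, ∀ b ∈ A, ∀ x ∈ I, toFun (a * x * b) = a * toFun x * b
  inner_right : ∀ x ∈ I, ∀ y ∈ I, star (toFun x) * toFun y = star x * y
  inner_left : ∀ x ∈ I, ∀ y ∈ I, toFun x * star (toFun y) = x * star y

/-- A hereditary C*-subalgebra `D` of the C*-subalgebra with carrier `A`. -/
structure IsHereditarySubalgebra (A : Set B) (D : Set B) : Prop where
  subset : D ⊆ A
  zero_mem : (0 : B) ∈ D
  add_mem : ∀ x ∈ D, ∀ y ∈ D, x + y ∈ D
  smul_mem : ∀ (c : ℂ), ∀ x ∈ D, c • x ∈ D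
  mul_mem : ∀ x ∈ D, ∀ y ∈ D, x * y ∈ D
  star_mem : ∀ x ∈ D, star x ∈ D
  isClosed : IsClosed D
  hereditary : ∀ x ∈ A, ∀ a ∈ D, 0 ≤ x → x ≤ a → x ∈ D

/-- Kishimoto's condition for an element `y ∈ B` relative to `A`. -/
def Kishimoto (A : Set B) (y : B) : Prop :=
  ∀ D : Set B, IsHereditarySubalgebra A D → D ≠ {0} → ∀ ε : ℝ, 0 < ε →
    ∃ a ∈ D, 0 ≤ a ∧ ‖a‖ = 1 ∧ ‖a * y * a‖ < ε

/-- The inclusion `A ⊆ B` is aperiodic. -/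
def AperiodicInclusion (A : Set B) : Prop :=
  ∀ b : B, ∀ D : Set B, IsHereditarySubalgebra A D → D ≠ {0} → ∀ ε : ℝ, 0 < ε →
    ∃ a ∈ D, 0 ≤ a ∧ ‖a‖ = 1 ∧ Metric.infDist (a * b * a) A < ε

/-- Every virtual commutant of `A` in `B` has range contained in `A`. -/
def VirtualCommutantsTrivial (A : Set B) : Prop :=
  ∀ I : CIdealIn A, ∀ φ : VirtualCommutant A I.carrier, ∀ x ∈ I.carrier, φ.toFun x ∈ A

/-- For every closed two-sided ideal `I` of `A`, every multiplier of `IBI` commuting with `I`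
maps `I` into `I`. -/
def CommutingMultipliersTrivial (A : Set B) : Prop :=
  ∀ I : CIdealIn A, ∀ C : NonUnitalStarSubalgebra ℂ B, (C : Set B) = IBISet I.carrier →
    ∀ τ : 𝓜(ℂ, C), (∀ x : C, (x : B) ∈ I.carrier → τ.fst x = τ.snd x) →
      ∀ x : C, (x : B) ∈ I.carrier → ((τ.fst x : C) : B) ∈ I.carrier

/-- Every slice isomorphic as a Hilbert `A`-bimodule to a closed two-sided ideal `I` of `A`
equals `I`. -/
def SlicesIsoIdealsTrivial (A : Set B) : Prop :=
  ∀ I : CIdealIn A, ∀ M : Submodule ℂ B, IsSlice A M →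
    Nonempty (HilbertBimoduleIso A I.carrier (M : Set B)) → (M : Set B) = I.carrier

/-- `E` is faithful and, for every closed two-sided ideal `I` of `A`, the restriction of `E`
to `IBI` is the only conditional expectation from `IBI` onto `I`. -/
def UniqueExpectationOnIdeals (A : Set B) (E : CondExp A) : Prop :=
  E.Faithful ∧ ∀ I : CIdealIn A,
    (∃ P : CondExpOnSub (IBISet I.carrier) I.carrier,
      ∀ x ∈ IBISet I.carrier, P.toFun x = E.toFun x) ∧
    (∀ P : CondExpOnSub (IBISet I.carrier) I.carrier,
      ∀ x ∈ IBISet I.carrier, P.toFun x = E.toFun x)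

/-- For every closed two-sided ideal `I` of `A` there is exactly one faithful conditional
expectation from `IBI` onto `I`. -/
def UniqueFaithfulExpectationOnIdeals (A : Set B) : Prop :=
  ∀ I : CIdealIn A,
    ∃ P : CondExpOnSub (IBISet I.carrier) I.carrier, P.Faithful ∧
      ∀ Q : CondExpOnSub (IBISet I.carrier) I.carrier, Q.Faithful →
        ∀ x ∈ IBISet I.carrier, Q.toFun x = P.toFun x

/-- `A ⊆ B` is a noncommutative Cartan subalgebra in the sense of Exel. -/
def IsNCCartan (A : Set B) : Prop :=
  RegularInclusion A ∧ (∃ E : CondExp A, E.AlmostFaithful) ∧ VirtualCommutantsTrivial A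

/-- `A` detects ideals in `B`. -/
def DetectsIdeals (A : Set B) : Prop :=
  ∀ J : CIdealIn (Set.univ : Set B), J.carrier ≠ {0} → J.carrier ∩ A ≠ {0}

/-- `A` supports `B`. -/
def Supports (A : Set B) : Prop :=
  ∀ b : B, 0 ≤ b → b ≠ 0 → ∃ a ∈ A, 0 ≤ a ∧ a ≠ 0 ∧
    ∀ ε : ℝ, 0 < ε → ∃ x : B, ‖star x * b * x - a‖ < ε

/-- The C*-algebra with carrier `A` is prime: any two nonzero closed two-sided ideals have
nonzero intersection. -/
def IsPrimeCStarSet (A : Set B) : Prop :=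
  ∀ I J : CIdealIn A, I.carrier ≠ {0} → J.carrier ≠ {0} → I.carrier ∩ J.carrier ≠ {0}

end NCCartan

open NCCartan

section AuxProof

open scoped ContinuousMapZero

variable {B : Type*} [NonUnitalCStarAlgebra B] [PartialOrder B] [StarOrderedRing B]
variable (A : NonUnitalStarSubalgebra ℂ B)

private lemma cfcn_mem (hA : IsClosed (A : Set B)) {h : B} (hh : h ∈ A) (hsa : IsSelfAdjoint h)
    {f : ℝ → ℝ} (hf : Continuous f) (hf0 : f 0 = 0) : cfcₙ f h ∈ A := by
  have key : ∀ g : C(quasispectrum ℝ h, ℝ)₀,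
      (cfcₙHom hsa : C(quasispectrum ℝ h, ℝ)₀ →⋆ₙₐ[ℝ] B) g ∈ A := by
    intro g
    set ψ : C(quasispectrum ℝ h, ℝ)₀ →⋆ₙₐ[ℝ] B :=
      (cfcₙHom hsa : C(quasispectrum ℝ h, ℝ)₀ →⋆ₙₐ[ℝ] B) with hψ
    have hdense := ContinuousMapZero.adjoin_id_dense (quasispectrum ℝ h)
    have hT : IsClosed (ψ ⁻¹' (A : Set B)) :=
      hA.preimage (cfcₙHom_isClosedEmbedding (R := ℝ) hsa).continuous
    have hsub : (NonUnitalStarAlgebra.adjoin ℝ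
        {(ContinuousMapZero.id (quasispectrum ℝ h) : C(quasispectrum ℝ h, ℝ)₀)} : Set _)
        ⊆ ψ ⁻¹' (A : Set B) := by
      intro x hx
      induction hx using NonUnitalStarAlgebra.adjoin_induction with
      | mem y hy =>
        simp only [Set.mem_singleton_iff] at hy
        subst hy
        have hid : ψ (ContinuousMapZero.id (quasispectrum ℝ h)) = h := by
          rw [hψ]
          have heq : (ContinuousMapZero.id (quasispectrum ℝ h) : C(quasispectrum ℝ h, ℝ)₀)
              = ⟨(ContinuousMap.id ℝ).restrict (quasispectrum ℝ h), rfl⟩ := by ext x; rfl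
          rw [heq]; exact cfcₙHom_id (R := ℝ) hsa
        simpa only [Set.mem_preimage, hid, SetLike.mem_coe] using hh
      | add x y hx hy hx' hy' => simpa only [Set.mem_preimage, map_add, SetLike.mem_coe] using add_mem hx' hy'
      | zero => simpa only [Set.mem_preimage, map_zero, SetLike.mem_coe] using zero_mem A
      | mul x y hx hy hx' hy' => simpa only [Set.mem_preimage, map_mul, SetLike.mem_coe] using mul_mem hx' hy'
      | smul r x hx hx' =>
        simp only [Set.mem_preimage, map_smul] at hx' ⊢
        have : (r : ℂ) • ψ x = r • ψ x := by
          rw [← algebraMap_smul ℂ r (ψ x)]; norm_num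
        exact this ▸ SMulMemClass.smul_mem (r : ℂ) hx'
      | star x hx hx' => simpa only [Set.mem_preimage, map_star, SetLike.mem_coe] using star_mem hx'
    have hg : g ∈ closure (NonUnitalStarAlgebra.adjoin ℝ
        {(ContinuousMapZero.id (quasispectrum ℝ h) : C(quasispectrum ℝ h, ℝ)₀)} : Set _) := by
      rw [hdense.closure_eq]; trivial
    exact closure_minimal hsub hT hg
  rw [cfcₙ_apply f h hf.continuousOn hf0 hsa]
  exact key _

private lemma conj_conj_nonneg {e : B} (hesa : IsSelfAdjoint e) {Y : B} (hY : 0 ≤ Y) :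
    0 ≤ e * Y * e - e * Y - Y * e + Y := by
  rw [StarOrderedRing.nonneg_iff] at hY
  refine AddSubmonoid.closure_induction ?_ ?_ ?_ hY
  · rintro x ⟨s, rfl⟩
    have hxe : e * (star s * s) * e - e * (star s * s) - star s * s * e + star s * s
        = star (s * e - s) * (s * e - s) := by
      simp only [star_sub, star_mul, hesa.star_eq]
      noncomm_ring
    rw [hxe]; exact star_mul_self_nonneg _
  · simp
  · intro x y _ _ hx hy
    have hxy : e*(x+y)*e - e*(x+y) - (x+y)*e + (x+y)
        = (e*x*e - e*x - x*e + x) + (e*y*e - e*y - y*e + y) := by noncomm_ring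
    rw [hxy]; exact add_nonneg hx hy

set_option maxHeartbeats 1000000 in
private lemma approx_left (hA : IsClosed (A : Set B))
    (hnd : Dense ((Submodule.span ℂ {x : B | ∃ a ∈ (A : Set B), ∃ b : B, x = a * b} :
      Submodule ℂ B) : Set B)) (v : B) {ε : ℝ} (hε : 0 < ε) :
    ∃ e : B, e ∈ A ∧ IsSelfAdjoint e ∧ ‖e‖ ≤ 1 ∧ ‖e * v - v‖ < ε := by
  obtain ⟨s, hs_mem, hs_close⟩ : ∃ s ∈ (Submodule.span ℂ
      {x : B | ∃ a ∈ (A : Set B), ∃ b : B, x = a * b} : Submodule ℂ B), ‖v - s‖ < ε/3 := by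
    have hv := hnd v
    rw [Metric.mem_closure_iff] at hv
    obtain ⟨s, hs, hd⟩ := hv (ε/3) (by positivity)
    exact ⟨s, hs, by rwa [dist_eq_norm] at hd⟩
  rw [Submodule.mem_span_set'] at hs_mem
  obtain ⟨nn, f, g, hsum⟩ := hs_mem
  choose a ha c hc using fun i => (g i).2
  set a' : Fin nn → B := fun i => f i • a i with ha'def
  have ha' : ∀ i, a' i ∈ A := fun i => SMulMemClass.smul_mem _ (ha i)
  have hs_rep : s = ∑ i, a' i * c i := by
    rw [← hsum]
    refine Finset.sum_congr rfl fun i _ => ?_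
    rw [ha'def]; simp only [smul_mul_assoc]; rw [← hc i]
  set Cb := ∑ i, ‖c i‖ with hCbdef
  have hCb : 0 ≤ Cb := Finset.sum_nonneg fun i _ => norm_nonneg _
  set η := ε / (3 * (Cb + 1)) with hηdef
  have hη : 0 < η := by positivity
  set k := 1/η^2 + 1 with hkdef
  have hk : 0 < k := by positivity
  have hk' : 1/k ≤ η^2 := by
    have h2 : (0:ℝ) < η^2 := by positivity
    rw [div_le_iff₀ hk, hkdef, mul_add, mul_one_div, div_self (ne_of_gt h2)]
    linarith
  set gf : ℝ → ℝ := fun t => min (k*t) 1 with hgfdef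
  have hgf : Continuous gf := (continuous_const.mul continuous_id).min continuous_const
  have hgf0 : gf 0 = 0 := by simp [hgfdef]
  set h := ∑ i, a' i * star (a' i) with hhdef
  have hhA : h ∈ A := sum_mem fun i _ => mul_mem (ha' i) (star_mem (ha' i))
  have hh0 : 0 ≤ h := Finset.sum_nonneg fun i _ => mul_star_self_nonneg _
  have hhsa : IsSelfAdjoint h := .of_nonneg hh0
  set e := cfcₙ gf h with hedef
  have heA : e ∈ A := cfcn_mem A hA hhA hhsa hgf hgf0
  have hesa : IsSelfAdjoint e := cfcₙ_predicate gf h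
  have hspec : ∀ t ∈ quasispectrum ℝ h, 0 ≤ t := quasispectrum_nonneg_of_nonneg h hh0
  have hgf01 : ∀ t : ℝ, 0 ≤ t → 0 ≤ gf t ∧ gf t ≤ 1 := by
    intro t ht
    constructor
    · exact le_min (by positivity) zero_le_one
    · exact min_le_right _ _
  have he1 : ‖e‖ ≤ 1 := by
    refine norm_cfcₙ_le fun t ht => ?_
    obtain ⟨h1, h2⟩ := hgf01 t (hspec t ht)
    rw [Real.norm_eq_abs, abs_le]
    exact ⟨by linarith, h2⟩
  have c2 : ContinuousOn (fun t : ℝ => gf t * t) (quasispectrum ℝ h) :=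
    (hgf.mul continuous_id).continuousOn
  have c1 : ContinuousOn (fun t : ℝ => (gf t * t) * gf t) (quasispectrum ℝ h) :=
    ((hgf.mul continuous_id).mul hgf).continuousOn
  have c3 : ContinuousOn (fun t : ℝ => t * gf t) (quasispectrum ℝ h) :=
    (continuous_id.mul hgf).continuousOn
  have c4 : ContinuousOn (fun t : ℝ => t * gf t - t) (quasispectrum ℝ h) :=
    ((continuous_id.mul hgf).sub continuous_id).continuousOn
  have c5 : ContinuousOn (fun t : ℝ => (gf t * t) * gf t - gf t * t) (quasispectrum ℝ h) :=
    (((hgf.mul continuous_id).mul hgf).sub (hgf.mul continuous_id)).continuousOn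
  have hΦ : e * h * e - e * h - (h * e - h)
      = cfcₙ (fun t => (gf t * t) * gf t - gf t * t - (t * gf t - t)) h := by
    rw [cfcₙ_sub _ _ h c5 (by simp [hgf0]) c4 (by simp),
        cfcₙ_sub _ _ h c1 (by simp [hgf0]) c2 (by simp [hgf0]),
        cfcₙ_sub _ _ h c3 (by simp [hgf0]) continuous_id'.continuousOn rfl,
        cfcₙ_mul _ _ h c2 (by simp [hgf0]) hgf.continuousOn hgf0,
        cfcₙ_mul _ _ h hgf.continuousOn hgf0 continuous_id'.continuousOn rfl,
        cfcₙ_mul _ _ h continuous_id'.continuousOn rfl hgf.continuousOn hgf0,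
        cfcₙ_id' ℝ h]
  have hφbound : ∀ t ∈ quasispectrum ℝ h,
      ‖(gf t * t) * gf t - gf t * t - (t * gf t - t)‖ ≤ η^2 := by
    intro t ht
    have ht0 := hspec t ht
    obtain ⟨hg0, hg1⟩ := hgf01 t ht0
    have hexpr : (gf t * t) * gf t - gf t * t - (t * gf t - t) = (1 - gf t)^2 * t := by ring
    rw [hexpr, Real.norm_eq_abs, abs_of_nonneg (by nlinarith)]
    rcases le_or_gt (1/k) t with hcase | hcase
    · have : gf t = 1 := by
        rw [hgfdef]
        simp only [min_eq_right_iff]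
        rw [div_le_iff₀ hk] at hcase
        linarith
      rw [this]; simpa using by positivity
    · have h1 : (1 - gf t)^2 ≤ 1 := by nlinarith
      have : (1 - gf t)^2 * t ≤ t := by nlinarith
      linarith [hk', hcase.le]
  have key : ∀ i, ‖e * a' i - a' i‖ ≤ η := by
    intro i
    set X := a' i * star (a' i) with hXdef
    have hXh : X ≤ h := by
      rw [hhdef]
      exact Finset.single_le_sum (f := fun j => a' j * star (a' j))
        (fun j _ => mul_star_self_nonneg _) (Finset.mem_univ i)
    have hZ : 0 ≤ (e * a' i - a' i) * star (e * a' i - a' i) := mul_star_self_nonneg _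
    have hZexp : (e * a' i - a' i) * star (e * a' i - a' i)
        = e * X * e - e * X - X * e + X := by
      simp only [star_sub, star_mul, hesa.star_eq, hXdef]
      noncomm_ring
    have hdiff := conj_conj_nonneg hesa (sub_nonneg.mpr hXh)
    have hle : (e * a' i - a' i) * star (e * a' i - a' i) ≤ e * h * e - e * h - (h * e - h) := by
      rw [hZexp]
      have hexp : e*(h-X)*e - e*(h-X) - (h-X)*e + (h-X)
          = (e*h*e - e*h - (h*e - h)) - (e*X*e - e*X - X*e + X) := by noncomm_ring
      rw [hexp] at hdiff
      exact sub_nonneg.mp hdiff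
    have hnorm : ‖(e * a' i - a' i) * star (e * a' i - a' i)‖
        ≤ ‖e * h * e - e * h - (h * e - h)‖ :=
      CStarAlgebra.norm_le_norm_of_nonneg_of_le hZ hle
    have hΦnorm : ‖e * h * e - e * h - (h * e - h)‖ ≤ η^2 := by
      rw [hΦ]; exact norm_cfcₙ_le hφbound
    have hsq : ‖e * a' i - a' i‖^2 ≤ η^2 := by
      rw [sq, ← CStarRing.norm_self_mul_star (x := e * a' i - a' i)]
      exact hnorm.trans hΦnorm
    exact (pow_le_pow_iff_left₀ (norm_nonneg _) hη.le (by norm_num)).mp hsq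
  have hes : ‖e * s - s‖ ≤ η * Cb := by
    rw [hs_rep, Finset.mul_sum, ← Finset.sum_sub_distrib]
    refine (norm_sum_le _ _).trans ?_
    rw [hCbdef, Finset.mul_sum]
    refine Finset.sum_le_sum fun i _ => ?_
    have : e * (a' i * c i) - a' i * c i = (e * a' i - a' i) * c i := by noncomm_ring
    rw [this]
    exact (norm_mul_le _ _).trans (mul_le_mul_of_nonneg_right (key i) (norm_nonneg _))
  refine ⟨e, heA, hesa, he1, ?_⟩
  have hdecomp : e * v - v = e * (v - s) + (e * s - s) + (s - v) := by noncomm_ring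
  have h1 : ‖e * (v - s)‖ < ε/3 := by
    calc ‖e * (v - s)‖ ≤ ‖e‖ * ‖v - s‖ := norm_mul_le _ _
    _ ≤ 1 * ‖v - s‖ := mul_le_mul_of_nonneg_right he1 (norm_nonneg _)
    _ = ‖v - s‖ := one_mul _
    _ < ε/3 := hs_close
  have h2 : ‖e * s - s‖ ≤ ε/3 := by
    refine hes.trans ?_
    rw [hηdef]
    rw [div_mul_eq_mul_div, div_le_div_iff₀ (by positivity) (by norm_num)]
    nlinarith
  have h3 : ‖s - v‖ < ε/3 := by rwa [norm_sub_rev]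
  calc ‖e * v - v‖ = ‖e * (v - s) + (e * s - s) + (s - v)‖ := by rw [hdecomp]
  _ ≤ ‖e * (v - s) + (e * s - s)‖ + ‖s - v‖ := norm_add_le _ _
  _ ≤ ‖e * (v - s)‖ + ‖e * s - s‖ + ‖s - v‖ := by linarith [norm_add_le (e * (v-s)) (e*s - s)]
  _ < ε := by linarith

private lemma approx_two (hA : IsClosed (A : Set B))
    (hnd : Dense ((Submodule.span ℂ {x : B | ∃ a ∈ (A : Set B), ∃ b : B, x = a * b} :
      Submodule ℂ B) : Set B)) (v : B) {ε : ℝ} (hε : 0 < ε) :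
    ∃ e ∈ A, ∃ f ∈ A, ‖e * v * f - v‖ < ε := by
  obtain ⟨f, hfA, hfsa, hf1, hvf⟩ : ∃ f : B, f ∈ A ∧ IsSelfAdjoint f ∧ ‖f‖ ≤ 1 ∧
      ‖v * f - v‖ < ε/2 := by
    obtain ⟨f, hfA, hfsa, hf1, hvf⟩ := approx_left A hA hnd (star v) (half_pos hε)
    refine ⟨f, hfA, hfsa, hf1, ?_⟩
    have hst : v * f - v = star (f * star v - star v) := by
      simp only [star_sub, star_mul, star_star, hfsa.star_eq]
    rw [hst, norm_star]; exact hvf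
  obtain ⟨e, heA, _, _, hev⟩ := approx_left A hA hnd (v * f) (half_pos hε)
  refine ⟨e, heA, f, hfA, ?_⟩
  have : e * v * f - v = (e * (v * f) - v * f) + (v * f - v) := by noncomm_ring
  calc ‖e * v * f - v‖ = ‖(e * (v * f) - v * f) + (v * f - v)‖ := by rw [this]
  _ ≤ ‖e * (v * f) - v * f‖ + ‖v * f - v‖ := norm_add_le _ _
  _ < ε/2 + ε/2 := add_lt_add hev hvf
  _ = ε := by ring

end AuxProof

section AuxProof2

open NCCartan
variable {B : Type*} [NonUnitalCStarAlgebra B] [PartialOrder B] [StarOrderedRing B]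
variable (A : NonUnitalStarSubalgebra ℂ B)

private lemma E_mul_right (hA : IsClosed (A : Set B))
    (hnd : Dense ((Submodule.span ℂ {x : B | ∃ a ∈ (A : Set B), ∃ b : B, x = a * b} :
      Submodule ℂ B) : Set B)) (E : CondExp (A : Set B))
    (v : B) {c : B} (hc : c ∈ (A : Set B)) : E.toFun (v * c) = E.toFun v * c := by
  have key : ∀ ε : ℝ, 0 < ε → ‖E.toFun (v * c) - E.toFun v * c‖ ≤ ε * (2 * ‖c‖ + 1) := by
    intro ε hε
    obtain ⟨e, heA, f, hfA, hef⟩ := approx_two A hA hnd v hε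
    set w := e * v * f with hwdef
    have hEwc : E.toFun (w * c) = E.toFun w * c := by
      have b1 : E.toFun (e * v * (f * c)) = e * E.toFun v * (f * c) :=
        E.bimodule e heA (f * c) (mul_mem hfA hc) v
      have b2 : E.toFun (e * v * f) = e * E.toFun v * f := E.bimodule e heA f hfA v
      calc E.toFun (w * c) = E.toFun (e * v * (f * c)) := by rw [hwdef, mul_assoc]
      _ = e * E.toFun v * (f * c) := b1
      _ = (e * E.toFun v * f) * c := (mul_assoc _ f c).symm
      _ = E.toFun w * c := by rw [hwdef, b2]
    have hwv : ‖w - v‖ ≤ ε := hef.le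
    have est1 : ‖E.toFun (v * c) - E.toFun (w * c)‖ ≤ ε * ‖c‖ := by
      have hvw : v * c - w * c = (v - w) * c := by noncomm_ring
      calc ‖E.toFun (v*c) - E.toFun (w*c)‖ = ‖E.toFun (v*c - w*c)‖ := by rw [map_sub]
      _ ≤ ‖v*c - w*c‖ := E.contractive _
      _ = ‖(v - w)*c‖ := by rw [hvw]
      _ ≤ ‖v - w‖ * ‖c‖ := norm_mul_le _ _
      _ ≤ ε * ‖c‖ := by
          have hvw2 : ‖v - w‖ ≤ ε := by rw [norm_sub_rev]; exact hwv
          exact mul_le_mul_of_nonneg_right hvw2 (norm_nonneg _)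
    have est2 : ‖E.toFun (w * c) - E.toFun v * c‖ ≤ ε * ‖c‖ := by
      rw [hEwc]
      have hsub : E.toFun w * c - E.toFun v * c = (E.toFun w - E.toFun v) * c := by noncomm_ring
      rw [hsub]
      calc ‖(E.toFun w - E.toFun v) * c‖ ≤ ‖E.toFun w - E.toFun v‖ * ‖c‖ := norm_mul_le _ _
      _ ≤ ‖w - v‖ * ‖c‖ := by
          rw [← map_sub]
          exact mul_le_mul_of_nonneg_right (E.contractive _) (norm_nonneg _)
      _ ≤ ε * ‖c‖ := mul_le_mul_of_nonneg_right hwv (norm_nonneg _)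
    have tri := dist_triangle (E.toFun (v*c)) (E.toFun (w*c)) (E.toFun v * c)
    rw [dist_eq_norm, dist_eq_norm, dist_eq_norm] at tri
    have : ε * ‖c‖ + ε * ‖c‖ ≤ ε * (2 * ‖c‖ + 1) := by nlinarith [norm_nonneg c]
    linarith
  have hfinal : ‖E.toFun (v * c) - E.toFun v * c‖ ≤ 0 := by
    by_contra hlt
    push_neg at hlt
    have hK : (0:ℝ) < 2 * ‖c‖ + 1 := by positivity
    have h := key (‖E.toFun (v * c) - E.toFun v * c‖ / (2*(2*‖c‖+1))) (by positivity)
    rw [div_mul_eq_mul_div] at h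
    have heq : ‖E.toFun (v * c) - E.toFun v * c‖ * (2*‖c‖+1) / (2*(2*‖c‖+1))
        = ‖E.toFun (v * c) - E.toFun v * c‖ / 2 := by
      field_simp
    rw [heq] at h; linarith
  have := norm_le_zero_iff.mp hfinal
  exact sub_eq_zero.mp this

private lemma E_mul_left (hA : IsClosed (A : Set B))
    (hnd : Dense ((Submodule.span ℂ {x : B | ∃ a ∈ (A : Set B), ∃ b : B, x = a * b} :
      Submodule ℂ B) : Set B)) (E : CondExp (A : Set B))
    (v : B) {c : B} (hc : c ∈ (A : Set B)) : E.toFun (c * v) = c * E.toFun v := by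
  have key : ∀ ε : ℝ, 0 < ε → ‖E.toFun (c * v) - c * E.toFun v‖ ≤ ε * (2 * ‖c‖ + 1) := by
    intro ε hε
    obtain ⟨e, heA, f, hfA, hef⟩ := approx_two A hA hnd v hε
    set w := e * v * f with hwdef
    have hEwc : E.toFun (c * w) = c * E.toFun w := by
      have b1 : E.toFun ((c * e) * v * f) = (c * e) * E.toFun v * f :=
        E.bimodule (c * e) (mul_mem hc heA) f hfA v
      have b2 : E.toFun (e * v * f) = e * E.toFun v * f := E.bimodule e heA f hfA v
      calc E.toFun (c * w) = E.toFun ((c * e) * v * f) := by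
            rw [hwdef]; congr 1; simp only [mul_assoc]
      _ = (c * e) * E.toFun v * f := b1
      _ = c * (e * E.toFun v * f) := by simp only [mul_assoc]
      _ = c * E.toFun w := by rw [hwdef, b2]
    have hwv : ‖w - v‖ ≤ ε := hef.le
    have est1 : ‖E.toFun (c * v) - E.toFun (c * w)‖ ≤ ε * ‖c‖ := by
      have hvw : c * v - c * w = c * (v - w) := by noncomm_ring
      calc ‖E.toFun (c*v) - E.toFun (c*w)‖ = ‖E.toFun (c*v - c*w)‖ := by rw [map_sub]
      _ ≤ ‖c*v - c*w‖ := E.contractive _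
      _ = ‖c * (v - w)‖ := by rw [hvw]
      _ ≤ ‖c‖ * ‖v - w‖ := norm_mul_le _ _
      _ ≤ ‖c‖ * ε := by
          have hvw2 : ‖v - w‖ ≤ ε := by rw [norm_sub_rev]; exact hwv
          exact mul_le_mul_of_nonneg_left hvw2 (norm_nonneg _)
      _ = ε * ‖c‖ := mul_comm _ _
    have est2 : ‖E.toFun (c * w) - c * E.toFun v‖ ≤ ε * ‖c‖ := by
      rw [hEwc]
      have hsub : c * E.toFun w - c * E.toFun v = c * (E.toFun w - E.toFun v) := by noncomm_ring
      rw [hsub]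
      calc ‖c * (E.toFun w - E.toFun v)‖ ≤ ‖c‖ * ‖E.toFun w - E.toFun v‖ := norm_mul_le _ _
      _ ≤ ‖c‖ * ‖w - v‖ := by
          rw [← map_sub]
          exact mul_le_mul_of_nonneg_left (E.contractive _) (norm_nonneg _)
      _ ≤ ‖c‖ * ε := mul_le_mul_of_nonneg_left hwv (norm_nonneg _)
      _ = ε * ‖c‖ := mul_comm _ _
    have tri := dist_triangle (E.toFun (c*v)) (E.toFun (c*w)) (c * E.toFun v)
    rw [dist_eq_norm, dist_eq_norm, dist_eq_norm] at tri
    have : ε * ‖c‖ + ε * ‖c‖ ≤ ε * (2 * ‖c‖ + 1) := by nlinarith [norm_nonneg c]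
    linarith
  have hfinal : ‖E.toFun (c * v) - c * E.toFun v‖ ≤ 0 := by
    by_contra hlt
    push_neg at hlt
    have h := key (‖E.toFun (c * v) - c * E.toFun v‖ / (2*(2*‖c‖+1))) (by positivity)
    rw [div_mul_eq_mul_div] at h
    have heq : ‖E.toFun (c * v) - c * E.toFun v‖ * (2*‖c‖+1) / (2*(2*‖c‖+1))
        = ‖E.toFun (c * v) - c * E.toFun v‖ / 2 := by
      field_simp
    rw [heq] at h; linarith
  have := norm_le_zero_iff.mp hfinal
  exact sub_eq_zero.mp this

private lemma normalizer_mul_star_mem (hA : IsClosed (A : Set B))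
    (hnd : Dense ((Submodule.span ℂ {x : B | ∃ a ∈ (A : Set B), ∃ b : B, x = a * b} :
      Submodule ℂ B) : Set B)) {n : B} (hn : IsNormalizerOf (A : Set B) n) :
    n * star n ∈ (A : Set B) := by
  rw [← hA.closure_eq]
  rw [Metric.mem_closure_iff]
  intro ε hε
  have hδ : (0:ℝ) < ε / (2 * (‖n‖ + 1)) := by positivity
  obtain ⟨e, heA, hesa, he1, hev⟩ := approx_left A hA hnd (star n) hδ
  refine ⟨n * (star e * e) * star n, hn.1 _ (mul_mem (star_mem heA) heA), ?_⟩
  rw [dist_eq_norm]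
  have hee : n * star n - n * (star e * e) * star n = n * (star n - star e * (e * star n)) := by
    noncomm_ring
  rw [hee]
  have hb1 : ‖star n - star e * (e * star n)‖ ≤ 2 * (ε / (2 * (‖n‖ + 1))) := by
    have hd : star n - star e * (e * star n)
        = (star n - e * star n) + (e * (star n - e * star n)) := by
      rw [hesa.star_eq]; noncomm_ring
    rw [hd]
    calc ‖(star n - e * star n) + (e * (star n - e * star n))‖
        ≤ ‖star n - e * star n‖ + ‖e * (star n - e * star n)‖ := norm_add_le _ _
    _ ≤ ‖star n - e * star n‖ + ‖e‖ * ‖star n - e * star n‖ := by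
        linarith [norm_mul_le e (star n - e * star n)]
    _ ≤ ‖star n - e * star n‖ + 1 * ‖star n - e * star n‖ := by
        have := norm_nonneg (star n - e * star n)
        nlinarith
    _ = 2 * ‖star n - e * star n‖ := by ring
    _ ≤ 2 * (ε / (2 * (‖n‖ + 1))) := by
        have : ‖star n - e * star n‖ ≤ ε / (2 * (‖n‖ + 1)) := by
          rw [norm_sub_rev]; exact hev.le
        linarith
  calc ‖n * (star n - star e * (e * star n))‖
      ≤ ‖n‖ * ‖star n - star e * (e * star n)‖ := norm_mul_le _ _
  _ ≤ ‖n‖ * (2 * (ε / (2 * (‖n‖ + 1)))) := mul_le_mul_of_nonneg_left hb1 (norm_nonneg _)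
  _ = ‖n‖ * ε / (‖n‖ + 1) := by field_simp
  _ < ε := by
      rw [div_lt_iff₀ (by positivity)]
      nlinarith [norm_nonneg n]

end AuxProof2

section AuxProof3

open NCCartan
variable {B : Type*} [NonUnitalCStarAlgebra B] [PartialOrder B] [StarOrderedRing B]
variable (A : NonUnitalStarSubalgebra ℂ B)

private lemma mem_topClosure_iff (S : Submodule ℂ B) (x : B) :
    x ∈ S.topologicalClosure ↔ x ∈ closure (S : Set B) := by
  rw [← SetLike.mem_coe, Submodule.topologicalClosure_coe]

private lemma isSlice_closure_span (hA : IsClosed (A : Set B)) (G : Set B)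
    (hl : ∀ a ∈ (A : Set B), ∀ g ∈ G, a * g ∈ G)
    (hr : ∀ g ∈ G, ∀ a ∈ (A : Set B), g * a ∈ G)
    (hsm : ∀ g ∈ G, ∀ g' ∈ G, star g * g' ∈ (A : Set B))
    (hms : ∀ g ∈ G, ∀ g' ∈ G, g * star g' ∈ (A : Set B)) :
    IsSlice (A : Set B) (Submodule.span ℂ G).topologicalClosure := by
  have hspan_l : ∀ a ∈ (A : Set B), ∀ x ∈ Submodule.span ℂ G,
      a * x ∈ Submodule.span ℂ G := by
    intro a haA x hx
    induction hx using Submodule.span_induction with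
    | mem y hy => exact Submodule.subset_span (hl a haA y hy)
    | zero => rw [mul_zero]; exact Submodule.zero_mem _
    | add y z hy hz hy' hz' => rw [mul_add]; exact Submodule.add_mem _ hy' hz'
    | smul t y hy hy' => rw [mul_smul_comm]; exact Submodule.smul_mem _ t hy'
  have hspan_r : ∀ a ∈ (A : Set B), ∀ x ∈ Submodule.span ℂ G,
      x * a ∈ Submodule.span ℂ G := by
    intro a haA x hx
    induction hx using Submodule.span_induction with
    | mem y hy => exact Submodule.subset_span (hr y hy a haA)
    | zero => rw [zero_mul]; exact Submodule.zero_mem _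
    | add y z hy hz hy' hz' => rw [add_mul]; exact Submodule.add_mem _ hy' hz'
    | smul t y hy hy' => rw [smul_mul_assoc]; exact Submodule.smul_mem _ t hy'
  have hsm_span : ∀ y ∈ Submodule.span ℂ G, ∀ z ∈ Submodule.span ℂ G,
      star y * z ∈ (A : Set B) := by
    intro y hy
    induction hy using Submodule.span_induction with
    | mem g hg =>
      intro z hz
      induction hz using Submodule.span_induction with
      | mem g' hg' => exact hsm g hg g' hg'
      | zero => rw [mul_zero]; exact A.zero_mem
      | add u w hu hw hu' hw' => rw [mul_add]; exact add_mem hu' hw'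
      | smul t u hu hu' => rw [mul_smul_comm]; exact SMulMemClass.smul_mem t hu'
    | zero => intro z hz; rw [star_zero, zero_mul]; exact A.zero_mem
    | add u w hu hw hu' hw' =>
      intro z hz; rw [star_add, add_mul]; exact add_mem (hu' z hz) (hw' z hz)
    | smul t u hu hu' =>
      intro z hz; rw [star_smul, smul_mul_assoc]; exact SMulMemClass.smul_mem _ (hu' z hz)
  have hms_span : ∀ y ∈ Submodule.span ℂ G, ∀ z ∈ Submodule.span ℂ G,
      y * star z ∈ (A : Set B) := by
    intro y hy
    induction hy using Submodule.span_induction with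
    | mem g hg =>
      intro z hz
      induction hz using Submodule.span_induction with
      | mem g' hg' => exact hms g hg g' hg'
      | zero => rw [star_zero, mul_zero]; exact A.zero_mem
      | add u w hu hw hu' hw' => rw [star_add, mul_add]; exact add_mem hu' hw'
      | smul t u hu hu' =>
        rw [star_smul, mul_smul_comm]; exact SMulMemClass.smul_mem _ hu'
    | zero => intro z hz; rw [zero_mul]; exact A.zero_mem
    | add u w hu hw hu' hw' =>
      intro z hz; rw [add_mul]; exact add_mem (hu' z hz) (hw' z hz)
    | smul t u hu hu' =>
      intro z hz; rw [smul_mul_assoc]; exact SMulMemClass.smul_mem _ (hu' z hz)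
  -- closure versions
  have hsm_cl : ∀ y ∈ closure (Submodule.span ℂ G : Set B),
      ∀ z ∈ closure (Submodule.span ℂ G : Set B), star y * z ∈ (A : Set B) := by
    intro y hy z hz
    have step1 : ∀ u ∈ closure (Submodule.span ℂ G : Set B), ∀ w ∈ (Submodule.span ℂ G : Set B),
        star u * w ∈ (A : Set B) := by
      intro u hu w hw
      have hcont : Continuous fun u : B => star u * w := continuous_star.mul continuous_const
      have hmt : Set.MapsTo (fun u : B => star u * w) (Submodule.span ℂ G : Set B)
          (A : Set B) := fun p hp => hsm_span p hp w hw
      have := (hmt.closure hcont) hu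
      rwa [hA.closure_eq] at this
    have hcont2 : Continuous fun z : B => star y * z := continuous_mul_left (star y)
    have hmt2 : Set.MapsTo (fun z : B => star y * z) (Submodule.span ℂ G : Set B)
        (A : Set B) := fun p hp => step1 y hy p hp
    have := (hmt2.closure hcont2) hz
    rwa [hA.closure_eq] at this
  have hms_cl : ∀ y ∈ closure (Submodule.span ℂ G : Set B),
      ∀ z ∈ closure (Submodule.span ℂ G : Set B), y * star z ∈ (A : Set B) := by
    intro y hy z hz
    have step1 : ∀ u ∈ closure (Submodule.span ℂ G : Set B), ∀ w ∈ (Submodule.span ℂ G : Set B),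
        u * star w ∈ (A : Set B) := by
      intro u hu w hw
      have hcont : Continuous fun u : B => u * star w := continuous_mul_right (star w)
      have hmt : Set.MapsTo (fun u : B => u * star w) (Submodule.span ℂ G : Set B)
          (A : Set B) := fun p hp => hms_span p hp w hw
      have := (hmt.closure hcont) hu
      rwa [hA.closure_eq] at this
    have hcont2 : Continuous fun z : B => y * star z :=
      (continuous_const.mul continuous_star : Continuous fun z : B => y * star z)
    have hmt2 : Set.MapsTo (fun z : B => y * star z) (Submodule.span ℂ G : Set B)
        (A : Set B) := fun p hp => step1 y hy p hp
    have := (hmt2.closure hcont2) hz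
    rwa [hA.closure_eq] at this
  constructor
  · exact Submodule.isClosed_topologicalClosure _
  · intro a haA m hm
    rw [mem_topClosure_iff] at hm ⊢
    have hmt : Set.MapsTo (fun x : B => a * x) (Submodule.span ℂ G : Set B)
        (Submodule.span ℂ G : Set B) := fun p hp => hspan_l a haA p hp
    exact (hmt.closure (continuous_mul_left a)) hm
  · intro a haA m hm
    rw [mem_topClosure_iff] at hm ⊢
    have hmt : Set.MapsTo (fun x : B => x * a) (Submodule.span ℂ G : Set B)
        (Submodule.span ℂ G : Set B) := fun p hp => hspan_r a haA p hp
    exact (hmt.closure (continuous_mul_right a)) hm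
  · intro m hm m' hm'
    rw [mem_topClosure_iff] at hm hm'
    exact hsm_cl m hm m' hm'
  · intro m hm m' hm'
    rw [mem_topClosure_iff] at hm hm'
    exact hms_cl m hm m' hm'

private lemma mem_closure_span_of_approx (G : Set B) (v : B)
    (hv : ∀ ε : ℝ, 0 < ε → ∃ w ∈ G, ‖v - w‖ < ε) :
    v ∈ (Submodule.span ℂ G).topologicalClosure := by
  rw [mem_topClosure_iff, Metric.mem_closure_iff]
  intro ε hε
  obtain ⟨w, hw, hwε⟩ := hv ε hε
  exact ⟨w, Submodule.subset_span hw, by rwa [dist_eq_norm]⟩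

end AuxProof3

section AuxProof4

open NCCartan
variable {B : Type*} [NonUnitalCStarAlgebra B] [PartialOrder B] [StarOrderedRing B]
variable (A : NonUnitalStarSubalgebra ℂ B)

set_option maxHeartbeats 1000000 in
private lemma cov_normalizer (hA : IsClosed (A : Set B))
    (hnd : Dense ((Submodule.span ℂ {x : B | ∃ a ∈ (A : Set B), ∃ b : B, x = a * b} :
      Submodule ℂ B) : Set B)) (E : CondExp (A : Set B))
    (hsl : ∀ M : Submodule ℂ B, IsSlice (A : Set B) M → ∀ m ∈ M, E.toFun m ∈ M)
    {n : B} (hn : IsNormalizerOf (A : Set B) n)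
    {ν : B} (hν : IsNormalizerOf (A : Set B) ν) :
    E.toFun (star n * ν * n) = star n * E.toFun ν * n := by
  classical
  -- the slice generated by ν
  set GM : Set B := {z | ∃ a ∈ (A : Set B), ∃ a' ∈ (A : Set B), z = a * ν * a'} with hGM
  set M' : Submodule ℂ B := (Submodule.span ℂ GM).topologicalClosure with hM'def
  have hM' : IsSlice (A : Set B) M' := by
    refine isSlice_closure_span A hA GM ?_ ?_ ?_ ?_
    · rintro a haA g ⟨a₁, h₁, a₂, h₂, rfl⟩
      exact ⟨a * a₁, mul_mem haA h₁, a₂, h₂, by simp only [mul_assoc]⟩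
    · rintro g ⟨a₁, h₁, a₂, h₂, rfl⟩ a haA
      exact ⟨a₁, h₁, a₂ * a, mul_mem h₂ haA, by simp only [mul_assoc]⟩
    · rintro g ⟨a₁, h₁, a₂, h₂, rfl⟩ g' ⟨a₃, h₃, a₄, h₄, rfl⟩
      have hX : star ν * (star a₁ * a₃) * ν ∈ (A : Set B) :=
        hν.2 _ (mul_mem (star_mem h₁) h₃)
      have heq : star (a₁ * ν * a₂) * (a₃ * ν * a₄)
          = star a₂ * (star ν * (star a₁ * a₃) * ν) * a₄ := by
        simp only [star_mul, mul_assoc]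
      rw [heq]
      exact mul_mem (mul_mem (star_mem h₂) hX) h₄
    · rintro g ⟨a₁, h₁, a₂, h₂, rfl⟩ g' ⟨a₃, h₃, a₄, h₄, rfl⟩
      have hX : ν * (a₂ * star a₄) * star ν ∈ (A : Set B) :=
        hν.1 _ (mul_mem h₂ (star_mem h₄))
      have heq : (a₁ * ν * a₂) * star (a₃ * ν * a₄)
          = a₁ * (ν * (a₂ * star a₄) * star ν) * star a₃ := by
        simp only [star_mul, mul_assoc]
      rw [heq]
      exact mul_mem (mul_mem h₁ hX) (star_mem h₃)
  have hνM : ν ∈ M' := by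
    refine mem_closure_span_of_approx GM ν ?_
    intro ε hε
    obtain ⟨e, heA, f, hfA, hef⟩ := approx_two A hA hnd ν hε
    exact ⟨e * ν * f, ⟨e, heA, f, hfA, rfl⟩, by rwa [norm_sub_rev]⟩
  set δ := E.toFun ν with hδdef
  have hδA : δ ∈ (A : Set B) := E.mem_range ν
  have hδM : δ ∈ M' := hsl M' hM' ν hνM
  set d := ν - δ with hddef
  have hdM : d ∈ M' := sub_mem hνM hδM
  have hEd : E.toFun d = 0 := by
    rw [hddef, map_sub, E.fixes δ hδA, ← hδdef, sub_self]
  -- the slice W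
  set GW : Set B := {z | ∃ a ∈ (A : Set B), ∃ a' ∈ (A : Set B), ∃ d' ∈ M',
      z = a * (star n * d' * n) * a'} with hGW
  set W : Submodule ℂ B := (Submodule.span ℂ GW).topologicalClosure with hWdef
  have hW : IsSlice (A : Set B) W := by
    refine isSlice_closure_span A hA GW ?_ ?_ ?_ ?_
    · rintro a haA g ⟨a₁, h₁, a₂, h₂, d₁, hd₁, rfl⟩
      exact ⟨a * a₁, mul_mem haA h₁, a₂, h₂, d₁, hd₁, by simp only [mul_assoc]⟩
    · rintro g ⟨a₁, h₁, a₂, h₂, d₁, hd₁, rfl⟩ a haA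
      exact ⟨a₁, h₁, a₂ * a, mul_mem h₂ haA, d₁, hd₁, by simp only [mul_assoc]⟩
    · rintro g ⟨a₁, h₁, a₂, h₂, d₁, hd₁, rfl⟩ g' ⟨a₃, h₃, a₄, h₄, d₂, hd₂, rfl⟩
      have hα : n * (star a₁ * a₃) * star n ∈ (A : Set B) :=
        hn.1 _ (mul_mem (star_mem h₁) h₃)
      have hαd : (n * (star a₁ * a₃) * star n) * d₂ ∈ M' :=
        hM'.mul_left _ hα d₂ hd₂
      have hβ : star d₁ * ((n * (star a₁ * a₃) * star n) * d₂) ∈ (A : Set B) :=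
        hM'.star_mul_mem d₁ hd₁ _ hαd
      have hγ : star n * (star d₁ * ((n * (star a₁ * a₃) * star n) * d₂)) * n ∈ (A : Set B) :=
        hn.2 _ hβ
      have heq : star (a₁ * (star n * d₁ * n) * a₂) * (a₃ * (star n * d₂ * n) * a₄)
          = star a₂ * (star n * (star d₁ * ((n * (star a₁ * a₃) * star n) * d₂)) * n) * a₄ := by
        simp only [star_mul, star_star, mul_assoc]
      rw [heq]
      exact mul_mem (mul_mem (star_mem h₂) hγ) h₄
    · rintro g ⟨a₁, h₁, a₂, h₂, d₁, hd₁, rfl⟩ g' ⟨a₃, h₃, a₄, h₄, d₂, hd₂, rfl⟩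
      have hα : n * (a₂ * star a₄) * star n ∈ (A : Set B) :=
        hn.1 _ (mul_mem h₂ (star_mem h₄))
      have hdα : d₁ * (n * (a₂ * star a₄) * star n) ∈ M' :=
        hM'.mul_right _ hα d₁ hd₁
      have hβ : (d₁ * (n * (a₂ * star a₄) * star n)) * star d₂ ∈ (A : Set B) :=
        hM'.mul_star_mem _ hdα d₂ hd₂
      have hγ : star n * ((d₁ * (n * (a₂ * star a₄) * star n)) * star d₂) * n ∈ (A : Set B) :=
        hn.2 _ hβ
      have heq : (a₁ * (star n * d₁ * n) * a₂) * star (a₃ * (star n * d₂ * n) * a₄)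
          = a₁ * (star n * ((d₁ * (n * (a₂ * star a₄) * star n)) * star d₂) * n) * star a₃ := by
        simp only [star_mul, star_star, mul_assoc]
      rw [heq]
      exact mul_mem (mul_mem h₁ hγ) (star_mem h₃)
  have hwW : star n * d * n ∈ W := by
    refine mem_closure_span_of_approx GW _ ?_
    intro ε hε
    obtain ⟨e, heA, f, hfA, hef⟩ := approx_two A hA hnd (star n * d * n) hε
    exact ⟨e * (star n * d * n) * f, ⟨e, heA, f, hfA, d, hdM, rfl⟩, by rwa [norm_sub_rev]⟩
  set r := E.toFun (star n * d * n) with hrdef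
  have hrA : r ∈ (A : Set B) := E.mem_range _
  have hrW : r ∈ W := hsl W hW _ hwW
  have hwr : (star n * d * n) * star r ∈ (A : Set B) := hW.mul_star_mem _ hwW r hrW
  have h1 : (star n * d * n) * star r = r * star r := by
    have hfix := E.fixes _ hwr
    rw [E_mul_right A hA hnd E (star n * d * n) (star_mem hrA)] at hfix
    rw [← hrdef] at hfix
    exact hfix.symm
  have hrrA : r * star r ∈ (A : Set B) := mul_mem hrA (star_mem hrA)
  have hyA : n * (r * star r) * star n ∈ (A : Set B) := hn.1 _ hrrA
  have hcA : n * star r * star n ∈ (A : Set B) := hn.1 (star r) (star_mem hrA)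
  have hnnA : n * star n ∈ (A : Set B) := normalizer_mul_star_mem A hA hnd hn
  have hkey : n * (r * star r) * star n = (n * star n) * d * (n * star r * star n) := by
    rw [← h1]; simp only [mul_assoc]
  have hEy : E.toFun ((n * star n) * d * (n * star r * star n)) = 0 := by
    rw [E.bimodule _ hnnA _ hcA d, hEd, mul_zero, zero_mul]
  have hy0 : n * (r * star r) * star n = 0 := by
    have hfix := E.fixes _ hyA
    rw [hkey] at hfix
    rw [hEy] at hfix
    rw [hkey]
    exact hfix.symm
  have hnr : n * r = 0 := by
    have h2 : (n * r) * star (n * r) = 0 := by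
      rw [star_mul]
      have hassoc : n * r * (star r * star n) = n * (r * star r) * star n := by
        simp only [mul_assoc]
      rw [hassoc, hy0]
    have hns := CStarRing.norm_self_mul_star (x := n * r)
    rw [h2, norm_zero] at hns
    have : ‖n * r‖ = 0 := by nlinarith [norm_nonneg (n * r)]
    exact norm_eq_zero.mp this
  have hr0 : r = 0 := by
    have hrw : star r * (star n * d * n) ∈ (A : Set B) := hW.star_mul_mem r hrW _ hwW
    have h3 : star r * (star n * d * n) = star r * r := by
      have hfix := E.fixes _ hrw
      rw [E_mul_left A hA hnd E (star n * d * n) (star_mem hrA)] at hfix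
      rw [← hrdef] at hfix
      exact hfix.symm
    have h4 : star r * (star n * d * n) = 0 := by
      have hassoc : star r * (star n * d * n) = (star r * star n) * (d * n) := by
        simp only [mul_assoc]
      rw [hassoc, ← star_mul, hnr, star_zero, zero_mul]
    have h5 : star r * r = 0 := by rw [← h3, h4]
    have hns := CStarRing.norm_star_mul_self (x := r)
    rw [h5, norm_zero] at hns
    have : ‖r‖ = 0 := by nlinarith [norm_nonneg r]
    exact norm_eq_zero.mp this
  have hsplit : star n * ν * n = star n * d * n + star n * δ * n := by
    rw [hddef]; noncomm_ring
  have hδn : star n * δ * n ∈ (A : Set B) := hn.2 δ hδA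
  rw [hsplit, map_add, ← hrdef, hr0, zero_add, E.fixes _ hδn]

private lemma covariance (hA : IsClosed (A : Set B))
    (hreg : RegularInclusion (A : Set B)) (E : CondExp (A : Set B))
    (hsl : ∀ M : Submodule ℂ B, IsSlice (A : Set B) M → ∀ m ∈ M, E.toFun m ∈ M)
    {n : B} (hn : IsNormalizerOf (A : Set B) n) (y : B) :
    E.toFun (star n * y * n) = star n * E.toFun y * n := by
  have hnd : Dense ((Submodule.span ℂ {x : B | ∃ a ∈ (A : Set B), ∃ b : B, x = a * b} :
      Submodule ℂ B) : Set B) := hreg.1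
  have hspan : ∀ y ∈ (Submodule.span ℂ {b : B | IsNormalizerOf (A : Set B) b} :
      Submodule ℂ B), E.toFun (star n * y * n) = star n * E.toFun y * n := by
    intro y hy
    induction hy using Submodule.span_induction with
    | mem ν hν => exact cov_normalizer A hA hnd E hsl hn hν
    | zero => simp
    | add u w hu hw hu' hw' =>
      have hx : star n * (u + w) * n = star n * u * n + star n * w * n := by noncomm_ring
      rw [hx, map_add, hu', hw', map_add]
      noncomm_ring
    | smul t u hu hu' =>
      have hx : star n * (t • u) * n = t • (star n * u * n) := by
        rw [mul_smul_comm, smul_mul_assoc]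
      rw [hx, map_smul, hu', map_smul, mul_smul_comm, smul_mul_assoc]
  have hEcont : Continuous E.toFun :=
    AddMonoidHomClass.continuous_of_bound E.toFun 1 fun b => by simpa using E.contractive b
  have hc1 : Continuous fun y : B => E.toFun (star n * y * n) := by
    exact hEcont.comp ((continuous_mul_left (star n)).mul continuous_const)
  have hc2 : Continuous fun y : B => star n * E.toFun y * n := by
    exact ((continuous_mul_left (star n)).comp hEcont).mul continuous_const
  have hclosed : IsClosed {y : B | E.toFun (star n * y * n) = star n * E.toFun y * n} :=
    isClosed_eq hc1 hc2
  have hyc : y ∈ closure ((Submodule.span ℂ {b : B | IsNormalizerOf (A : Set B) b} :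
      Submodule ℂ B) : Set B) := by
    rw [hreg.2.closure_eq]; trivial
  exact closure_minimal (fun z hz => hspan z hz) hclosed hyc

end AuxProof4


/-- A slice-preserving almost faithful conditional expectation on a regular inclusion is
faithful. -/
theorem statement_9 {B : Type*} [NonUnitalCStarAlgebra B] [PartialOrder B] [StarOrderedRing B]
    (A : NonUnitalStarSubalgebra ℂ B) [IsClosed (A : Set B)]
    (hreg : RegularInclusion (A : Set B))
    (E : CondExp (A : Set B)) (haf : E.AlmostFaithful)
    (hsl : ∀ M : Submodule ℂ B, IsSlice (A : Set B) M → ∀ m ∈ M, E.toFun m ∈ M) :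
    E.Faithful := by
  intro b hb
  have hA : IsClosed (A : Set B) := inferInstance
  apply haf b
  have hEcont : Continuous E.toFun :=
    AddMonoidHomClass.continuous_of_bound E.toFun 1 fun v => by simpa using E.contractive v
  have hker_add : ∀ u v : B, E.toFun (star u * u) = 0 → E.toFun (star v * v) = 0 →
      E.toFun (star (u + v) * (u + v)) = 0 := by
    intro u v hu hv
    have hexp : star (u + v) * (u + v)
        = star u * u + (star u * v + star v * u) + star v * v := by
      rw [star_add]; noncomm_ring
    have hexp2 : star (u - v) * (u - v)
        = star u * u - (star u * v + star v * u) + star v * v := by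
      rw [star_sub]; noncomm_ring
    have h1 : 0 ≤ E.toFun (star u * v + star v * u) := by
      have hpos := E.positive _ (star_mul_self_nonneg (u + v))
      rw [hexp] at hpos
      simpa only [map_add, hu, hv, zero_add, add_zero] using hpos
    have h2 : E.toFun (star u * v + star v * u) ≤ 0 := by
      have hpos := E.positive _ (star_mul_self_nonneg (u - v))
      rw [hexp2] at hpos
      rw [map_add, map_sub, hu, hv, zero_sub, add_zero] at hpos
      exact neg_nonneg.mp hpos
    have hs : E.toFun (star u * v + star v * u) = 0 := le_antisymm h2 h1
    rw [hexp]
    simp only [map_add, hu, hv, hs, add_zero, zero_add]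
  have hspan : ∀ c ∈ (Submodule.span ℂ {z : B | IsNormalizerOf (A : Set B) z} :
      Submodule ℂ B), E.toFun (star (b * c) * (b * c)) = 0 := by
    intro c hc
    induction hc using Submodule.span_induction with
    | mem ν hν =>
      have h1 : star (b * ν) * (b * ν) = star ν * (star b * b) * ν := by
        simp only [star_mul, mul_assoc]
      rw [h1, covariance A hA hreg E hsl hν (star b * b), hb, mul_zero, zero_mul]
    | zero => simp
    | add u w hu hw hu' hw' =>
      have hadd := hker_add (b * u) (b * w) hu' hw'
      rwa [← mul_add] at hadd
    | smul t u hu hu' =>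
      have h1 : b * (t • u) = t • (b * u) := mul_smul_comm t b u
      rw [h1, star_smul, smul_mul_smul_comm, map_smul, hu', smul_zero]
  intro c
  have hclosed : IsClosed {c : B | E.toFun (star (b * c) * (b * c)) = 0} := by
    have hbc : Continuous fun c : B => b * c := continuous_mul_left b
    have hcont : Continuous fun c : B => E.toFun (star (b * c) * (b * c)) :=
      hEcont.comp ((continuous_star.comp hbc).mul hbc)
    exact isClosed_eq hcont continuous_const
  have hcc : c ∈ closure ((Submodule.span ℂ {z : B | IsNormalizerOf (A : Set B) z} :
      Submodule ℂ B) : Set B) := by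
    rw [hreg.2.closure_eq]; trivial
  exact closure_minimal (fun z hz => hspan z hz) hclosed hcc
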